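/- Let T be an R-tree with an isometric action of F_N with dense orbits and trivial arc stabilizers, let μ be an invariant nonatomic length measure on T that is absolutely continuous with respect to Lebesgue measure, and let f_μ : T → T_μ be the quotient map collapsing the pseudo-metric d_μ(x,y) = μ([x,y]). Then for every point x ∈ T_μ, the fiber f_μ^{-1}(x) is a closed subtree of T, and Stab(f_μ^{-1}(x)) = Stab(x). Moreover, if some fiber f_μ^{-1}(x) is nondegenerate, then the collection of translates {g·f_μ^{-1}(x) : g ∈ F_N} is a transverse family in T. -/

import Mathlib

open Pointwise

/-- The segment `[x,y]` in a metric space (in an `ℝ`-tree this is the arc from `x` to `y`). -/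
def seg {T : Type*} [MetricSpace T] (x y : T) : Set T :=
  {z : T | dist x z + dist z y = dist x y}

/-- An `ℝ`-tree: a geodesic metric space that is `0`-hyperbolic (four-point condition),
equivalently any two points are joined by a unique arc, isometric to a real interval. -/
def IsRTree (T : Type*) [MetricSpace T] : Prop :=
  (∀ x y : T, ∃ f : ℝ → T, f 0 = x ∧ f (dist x y) = y ∧
      ∀ s ∈ Set.Icc (0 : ℝ) (dist x y), ∀ t ∈ Set.Icc (0 : ℝ) (dist x y),
        dist (f s) (f t) = |s - t|) ∧
  ∀ x y z w : T, dist x y + dist z w ≤ max (dist x z + dist y w) (dist x w + dist y z)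

/-- A subtree: a convex subset. -/
def IsSubtree {T : Type*} [MetricSpace T] (Y : Set T) : Prop :=
  ∀ x ∈ Y, ∀ y ∈ Y, seg x y ⊆ Y

/-- An arc: a subset isometric to a nondegenerate closed real interval. -/
def IsArc {T : Type*} [MetricSpace T] (A : Set T) : Prop :=
  ∃ (a b : ℝ) (f : ℝ → T), a < b ∧
    (∀ s ∈ Set.Icc a b, ∀ t ∈ Set.Icc a b, dist (f s) (f t) = |s - t|) ∧
    A = f '' Set.Icc a b

/-- A transverse family: a `G`-invariant collection of nondegenerate subtrees, any two
distinct members of which intersect in at most one point. -/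
structure IsTransverseFamily (G : Type*) {T : Type*} [Group G] [MulAction G T]
    [MetricSpace T] (F : Set (Set T)) : Prop where
  invariant : ∀ (g : G), ∀ Y ∈ F, g • Y ∈ F
  subtree : ∀ Y ∈ F, IsSubtree Y
  nondeg : ∀ Y ∈ F, ¬Y.Subsingleton
  transverse : ∀ Y ∈ F, ∀ Y' ∈ F, Y ≠ Y' → (Y ∩ Y').Subsingleton

open MeasureTheory

section helpers

variable {T : Type*} [MetricSpace T]

lemma seg_comm (x y : T) : seg x y = seg y x := by
  ext w
  simp only [seg, Set.mem_setOf_eq, dist_comm x w, dist_comm w y, dist_comm x y]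
  constructor <;> intro h <;> linarith

lemma left_mem_seg (x y : T) : x ∈ seg x y := by simp [seg]

lemma isClosed_seg (x y : T) : IsClosed (seg x y) :=
  isClosed_eq ((continuous_const.dist continuous_id).add (continuous_id.dist continuous_const)) continuous_const

lemma seg_self (x : T) : seg x x = {x} := by
  ext w
  simp only [seg, Set.mem_setOf_eq, dist_self, Set.mem_singleton_iff]
  constructor
  · intro h
    have h1 : (0:ℝ) ≤ dist x w := dist_nonneg
    have h2 : (0:ℝ) ≤ dist w x := dist_nonneg
    have : dist x w = 0 := by linarith
    exact (dist_eq_zero.mp this).symm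
  · rintro rfl; simp

lemma seg_subset_union
    (hyp : ∀ x y z w : T, dist x y + dist z w ≤ max (dist x z + dist y w) (dist x w + dist y z))
    (a b c : T) : seg a c ⊆ seg a b ∪ seg b c := by
  intro w hw
  have hw' : dist a w + dist w c = dist a c := hw
  have e1 : dist b w = dist w b := dist_comm _ _
  have e2 : dist c w = dist w c := dist_comm _ _
  have e3 : dist c b = dist b c := dist_comm _ _
  rcases le_max_iff.mp (hyp a c b w) with h | h
  · left
    exact le_antisymm (by linarith) (dist_triangle a w b)
  · right
    show dist b w + dist w c = dist b c
    exact le_antisymm (by linarith) (dist_triangle b w c)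

lemma seg_subset_of_mem {y y' w : T} (hw : w ∈ seg y y') : seg y w ⊆ seg y y' := by
  intro u hu
  have hu' : dist y u + dist u w = dist y w := hu
  have hw' : dist y w + dist w y' = dist y y' := hw
  have ht : dist u y' ≤ dist u w + dist w y' := dist_triangle u w y'
  exact le_antisymm (by linarith) (dist_triangle y u y')

lemma mem_seg_near
    (hyp : ∀ x y z w : T, dist x y + dist z w ≤ max (dist x z + dist y w) (dist x w + dist y z))
    {z y y' w : T} (hw : w ∈ seg z y) (hle : dist y y' ≤ dist w y) : w ∈ seg z y' := by
  have hw' : dist z w + dist w y = dist z y := hw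
  have e1 : dist y z = dist z y := dist_comm _ _
  have e2 : dist y' z = dist z y' := dist_comm _ _
  have e3 : dist y' y = dist y y' := dist_comm _ _
  have e4 : dist w z = dist z w := dist_comm _ _
  have ht : dist z y ≤ dist z y' + dist y' y := dist_triangle z y' y
  rcases le_max_iff.mp (hyp w y' y z) with h | h
  · exact le_antisymm (by linarith) (dist_triangle z w y')
  · exact le_antisymm (by linarith) (dist_triangle z w y')

end helpers

open MeasureTheory Pointwise in
/-- Let `T` be an `ℝ`-tree with an isometric `F_N`-action with dense orbits and trivial arc
stabilizers, and let `μ` be an invariant nonatomic length measure on `T` (finite on segments)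
absolutely continuous with respect to the `1`-dimensional Hausdorff (Lebesgue) measure.  Then
every fiber `{y | μ [z,y] = 0}` of the projection `f_μ : T → T_μ` is a closed subtree, its
setwise stabilizer coincides with the stabilizer of the corresponding point of `T_μ`, and if
some fiber is nondegenerate then its translates form a transverse family. -/
theorem fibers_of_measure_projection
    {T : Type*} [MetricSpace T] [MeasurableSpace T] [BorelSpace T]
    {N : ℕ} [MulAction (FreeGroup (Fin N)) T]
    (hT : IsRTree T) (hiso : ∀ g : FreeGroup (Fin N), Isometry fun x : T => g • x)
    (hdense : ∀ x : T, Dense (MulAction.orbit (FreeGroup (Fin N)) x : Set T))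
    (harc : ∀ (g : FreeGroup (Fin N)) (x y : T), x ≠ y →
      (∀ z ∈ seg x y, g • z = z) → g = 1)
    (μ : Measure T) [SMulInvariantMeasure (FreeGroup (Fin N)) T μ]
    (hfin : ∀ x y : T, μ (seg x y) < ⊤)
    (hatom : ∀ x : T, μ {x} = 0)
    (hac : μ ≪ Measure.hausdorffMeasure 1) :
    (∀ z : T, IsClosed {y : T | μ (seg z y) = 0} ∧ IsSubtree {y : T | μ (seg z y) = 0}) ∧
      (∀ (z : T) (g : FreeGroup (Fin N)),
        g • {y : T | μ (seg z y) = 0} = {y : T | μ (seg z y) = 0} ↔ μ (seg z (g • z)) = 0) ∧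
      (∀ z : T, ¬({y : T | μ (seg z y) = 0} : Set T).Subsingleton →
        IsTransverseFamily (FreeGroup (Fin N))
          {A : Set T | ∃ g : FreeGroup (Fin N), A = g • {y : T | μ (seg z y) = 0}}) := by
  -- basic pseudometric facts for `d_μ`
  have refl0 : ∀ z : T, μ (seg z z) = 0 := fun z => by rw [seg_self]; exact hatom z
  have symm0 : ∀ a b : T, μ (seg a b) = 0 → μ (seg b a) = 0 := fun a b h => by
    rwa [seg_comm] at h
  have trans0 : ∀ a b c : T, μ (seg a b) = 0 → μ (seg b c) = 0 → μ (seg a c) = 0 := by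
    intro a b c h1 h2
    refine le_antisymm ?_ zero_le
    calc μ (seg a c) ≤ μ (seg a b ∪ seg b c) := measure_mono (seg_subset_union hT.2 a b c)
      _ ≤ μ (seg a b) + μ (seg b c) := measure_union_le _ _
      _ = 0 := by rw [h1, h2, add_zero]
  -- equivariance of segments and of `d_μ`
  have hseg_smul : ∀ (g : FreeGroup (Fin N)) (a b : T),
      seg (g • a) (g • b) = (fun w : T => g⁻¹ • w) ⁻¹' seg a b := by
    intro g a b
    ext w
    have h1 : dist (g • a) w = dist a (g⁻¹ • w) := by
      have := (hiso g).dist_eq a (g⁻¹ • w)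
      rw [smul_inv_smul] at this; exact this
    have h2 : dist w (g • b) = dist (g⁻¹ • w) b := by
      have := (hiso g).dist_eq (g⁻¹ • w) b
      rw [smul_inv_smul] at this; exact this
    have h3 : dist (g • a) (g • b) = dist a b := (hiso g).dist_eq a b
    simp only [seg, Set.mem_setOf_eq, Set.mem_preimage, h1, h2, h3]
  have hμinv : ∀ (g : FreeGroup (Fin N)) (a b : T),
      μ (seg (g • a) (g • b)) = μ (seg a b) := by
    intro g a b
    rw [hseg_smul g a b]
    exact measure_preimage_smul μ g⁻¹ (seg a b)
  -- translates of fibers are fibers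
  have smul_fib : ∀ (g : FreeGroup (Fin N)) (z : T),
      g • {y : T | μ (seg z y) = 0} = {y : T | μ (seg (g • z) y) = 0} := by
    intro g z
    ext y
    rw [Set.mem_smul_set_iff_inv_smul_mem]
    have : μ (seg (g • z) y) = μ (seg z (g⁻¹ • y)) := by
      have := hμinv g z (g⁻¹ • y)
      rwa [smul_inv_smul] at this
    simp only [Set.mem_setOf_eq, this]
  -- fibers through `d_μ`-equivalent points coincide
  have fib_eq : ∀ z z' : T, μ (seg z z') = 0 →
      {y : T | μ (seg z y) = 0} = {y : T | μ (seg z' y) = 0} := by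
    intro z z' h
    ext y
    simp only [Set.mem_setOf_eq]
    exact ⟨fun hy => trans0 z' z y (symm0 _ _ h) hy, fun hy => trans0 z z' y h hy⟩
  -- fibers are closed
  have closed : ∀ z : T, IsClosed {y : T | μ (seg z y) = 0} := by
    intro z
    apply IsSeqClosed.isClosed
    intro u y hu hlim
    show μ (seg z y) = 0
    have hsub : seg z y ⊆ {y} ∪ ⋃ n, seg z (u n) := by
      intro w hw
      by_cases hwy : w = y
      · exact Or.inl hwy
      · right
        have hpos : 0 < dist w y := dist_pos.mpr hwy
        obtain ⟨n, hn⟩ := (Metric.tendsto_atTop.mp hlim (dist w y) hpos) |>.imp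
          (fun n h => h n le_rfl)
        have hdy : dist y (u n) ≤ dist w y := by
          rw [dist_comm]; exact hn.le
        exact Set.mem_iUnion.mpr ⟨n, mem_seg_near hT.2 hw hdy⟩
    refine le_antisymm ?_ zero_le
    calc μ (seg z y) ≤ μ (({y} : Set T) ∪ ⋃ n, seg z (u n)) := measure_mono hsub
      _ ≤ μ ({y} : Set T) + μ (⋃ n, seg z (u n)) := measure_union_le _ _
      _ ≤ μ ({y} : Set T) + ∑' n, μ (seg z (u n)) := by
          gcongr; exact measure_iUnion_le _
      _ = 0 := by
          have hz0 : ∀ n, μ (seg z (u n)) = 0 := fun n => hu n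
          rw [hatom y]
          simp [hz0]
  -- fibers are subtrees
  have subtree : ∀ z : T, IsSubtree {y : T | μ (seg z y) = 0} := by
    intro z a ha b hb w hw
    have ha' : μ (seg z a) = 0 := ha
    have hb' : μ (seg z b) = 0 := hb
    have hab : μ (seg a b) = 0 := trans0 a z b (symm0 _ _ ha') hb'
    have haw : μ (seg a w) = 0 :=
      le_antisymm (hab ▸ measure_mono (seg_subset_of_mem hw)) zero_le
    exact trans0 z a w ha' haw
  refine ⟨fun z => ⟨closed z, subtree z⟩, ?_, ?_⟩
  · -- stabilizer statement
    intro z g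
    constructor
    · intro h
      have hz : z ∈ {y : T | μ (seg z y) = 0} := refl0 z
      have : g • z ∈ g • {y : T | μ (seg z y) = 0} := Set.smul_mem_smul_set hz
      rw [h] at this
      exact this
    · intro h
      rw [smul_fib g z]
      exact (fib_eq z (g • z) h).symm
  · -- transverse family
    intro z hz
    constructor
    · rintro g Y ⟨g', rfl⟩
      exact ⟨g * g', smul_smul g g' _⟩
    · rintro Y ⟨g, rfl⟩
      rw [smul_fib g z]
      exact subtree (g • z)
    · rintro Y ⟨g, rfl⟩ hsub
      apply hz
      have := hsub.image (fun x : T => g⁻¹ • x)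
      rwa [Set.image_smul, inv_smul_smul] at this
    · rintro Y ⟨g, rfl⟩ Y' ⟨g', rfl⟩ hne a ⟨ha1, ha2⟩ b _
      exfalso
      apply hne
      rw [smul_fib g z, smul_fib g' z] at *
      have h1 : μ (seg (g • z) a) = 0 := ha1
      have h2 : μ (seg (g' • z) a) = 0 := ha2
      exact fib_eq (g • z) (g' • z) (trans0 _ a _ h1 (symm0 _ _ h2))
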